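/- Let K ≥ 1, let M ∈ ℂ^{K×K} be Hermitian, M̃ ∈ ℂ^{K×K} Hermitian negative definite, P ∈ ℂ^{K×K} Hermitian, and let 𝒮 ⊆ {0,…,K−1}². Then the real-valued function G ↦ log det(I+G) + Tr(M(I+G)) + sup{ 2 Re Tr(PMR) + Tr((I+G)⁻¹ R M̃ Rᴴ) : R ∈ ℂ^{K×K} vanishing at every position outside 𝒮 } is concave on the convex set of Hermitian K×K matrices G with I+G positive definite (the supremum is finite for every such G since M̃ is negative definite). -/

import Mathlib

open Matrix
open scoped ComplexOrder

namespace GmiAux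

variable {K : ℕ}

/-- Real smul on complex matrices is complex smul of the coercion. -/
lemma real_smul_eq (a : ℝ) (A : Matrix (Fin K) (Fin K) ℂ) : a • A = (a : ℂ) • A := by
  ext i j
  simp [Matrix.smul_apply, Complex.real_smul]

lemma trace_re_nonneg {A : Matrix (Fin K) (Fin K) ℂ} (hA : A.PosSemidef) :
    0 ≤ (A.trace).re := by
  have h : ∀ i, 0 ≤ (A i i).re := by
    intro i
    have := hA.diag_nonneg (i := i)
    rw [RCLike.nonneg_iff] at this
    simpa [Matrix.mulVec_single, dotProduct, Pi.single_apply, Finset.sum_ite_eq] using this.1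
  simp only [Matrix.trace, Matrix.diag, Complex.re_sum]
  exact Finset.sum_nonneg fun i _ => h i

lemma trace_mul_re_nonneg {A B : Matrix (Fin K) (Fin K) ℂ}
    (hA : A.PosSemidef) (hB : B.PosSemidef) : 0 ≤ (Matrix.trace (A * B)).re := by
  obtain ⟨C, rfl⟩ : ∃ C : Matrix (Fin K) (Fin K) ℂ, B = Cᴴ * C := by
    open scoped MatrixOrder in
    exact ⟨CFC.sqrt B, by
      rw [(CFC.sqrt_nonneg B).posSemidef.1.eq, CFC.sqrt_mul_sqrt_self B hB.nonneg]⟩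
  have h : Matrix.trace (A * (Cᴴ * C)) = Matrix.trace (C * A * Cᴴ) := by
    rw [← Matrix.mul_assoc, Matrix.trace_mul_cycle]
  rw [h]
  exact trace_re_nonneg (hA.mul_mul_conjTranspose_same C)

lemma posDef_conj {A B : Matrix (Fin K) (Fin K) ℂ} (hA : A.PosDef) (hB : IsUnit B) :
    (Bᴴ * A * B).PosDef := by
  refine ⟨Matrix.isHermitian_conjTranspose_mul_mul B hA.1, fun x hx => ?_⟩
  have hinj : Function.Injective B.mulVec := Matrix.mulVec_injective_iff_isUnit.mpr hB
  exact (hA.conjTranspose_mul_mul_same hinj).2 hx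

lemma posDef_of_sq {S X : Matrix (Fin K) (Fin K) ℂ} (hS : S.PosSemidef)
    (hX : X.PosDef) (h : S * S = X) : S.PosDef := by
  refine PosDef.of_dotProduct_mulVec_pos hS.1 fun x hx => lt_of_le_of_ne (hS.dotProduct_mulVec_nonneg x) fun h0 => ?_
  have hz : S *ᵥ x = 0 := (hS.dotProduct_mulVec_zero_iff x).mp h0.symm
  have hXx : X *ᵥ x = 0 := by rw [← h, ← Matrix.mulVec_mulVec, hz, Matrix.mulVec_zero]
  have := hX.dotProduct_mulVec_pos hx
  rw [hXx, dotProduct_zero] at this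
  exact lt_irrefl _ this

lemma posDef_smul {A : Matrix (Fin K) (Fin K) ℂ} (hA : A.PosDef) {a : ℝ} (ha : 0 < a) :
    ((a : ℂ) • A).PosDef := by
  refine PosDef.of_dotProduct_mulVec_pos ?_ fun x hx => ?_
  · unfold Matrix.IsHermitian
    rw [Matrix.conjTranspose_smul, hA.1.eq]
    congr 1
    simp
  · rw [Matrix.smul_mulVec, dotProduct_smul, smul_eq_mul]
    exact mul_pos (by exact_mod_cast ha) (hA.dotProduct_mulVec_pos hx)

lemma posDef_combo {A B : Matrix (Fin K) (Fin K) ℂ} (hA : A.PosDef) (hB : B.PosDef)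
    {a b : ℝ} (ha : 0 ≤ a) (hb : 0 ≤ b) (hab : a + b = 1) :
    ((a : ℂ) • A + (b : ℂ) • B).PosDef := by
  rcases eq_or_lt_of_le ha with h0 | hpa
  · have hb1 : b = 1 := by linarith
    simpa [← h0, hb1] using hB
  rcases eq_or_lt_of_le hb with h0 | hpb
  · have ha1 : a = 1 := by linarith
    simpa [← h0, ha1] using hA
  exact (posDef_smul hA hpa).add (posDef_smul hB hpb)

lemma trace_re_eq_sum_eigen {A : Matrix (Fin K) (Fin K) ℂ} (hA : A.IsHermitian) :
    (A.trace).re = ∑ i, hA.eigenvalues i := by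
  have h : A.trace = Matrix.trace (Matrix.diagonal (RCLike.ofReal ∘ hA.eigenvalues)
      : Matrix (Fin K) (Fin K) ℂ) := by
    rw [hA.trace_eq_sum_eigenvalues, Matrix.trace_diagonal]
    rfl
  rw [h, Matrix.trace_diagonal]
  rw [show ∑ i, (RCLike.ofReal ∘ hA.eigenvalues) i = ((∑ i, hA.eigenvalues i : ℝ) : ℂ) by
    push_cast; rfl]
  exact Complex.ofReal_re _

lemma det_re_eq_prod_eigen {A : Matrix (Fin K) (Fin K) ℂ} (hA : A.IsHermitian) :
    (A.det).re = ∏ i, hA.eigenvalues i := by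
  rw [hA.det_eq_prod_eigenvalues]
  norm_cast

lemma det_eq_ofReal_re {A : Matrix (Fin K) (Fin K) ℂ} (hA : A.PosDef) :
    A.det = ((A.det.re : ℝ) : ℂ) := by
  have h := hA.det_pos
  rw [RCLike.pos_iff] at h
  exact Complex.ext (by simp) h.2

lemma det_re_pos {A : Matrix (Fin K) (Fin K) ℂ} (hA : A.PosDef) : 0 < A.det.re := by
  have h := hA.det_pos
  rw [RCLike.pos_iff] at h
  simpa using h.1

lemma log_det_re {A : Matrix (Fin K) (Fin K) ℂ} (hA : A.PosDef) :
    (Complex.log A.det).re = Real.log (A.det.re) := by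
  rw [det_eq_ofReal_re hA, Complex.log_ofReal_re, Complex.ofReal_re]


open scoped MatrixOrder in
lemma logdet_tangent {X A : Matrix (Fin K) (Fin K) ℂ} (hX : X.PosDef) (hA : A.PosDef) :
    Real.log (A.det.re) ≤ (Matrix.trace (X⁻¹ * A)).re + Real.log (X.det.re) - K := by
  have hSps : X.PosSemidef := hX.posSemidef
  set S := CFC.sqrt X with hSdef
  have hSS : S * S = X := CFC.sqrt_mul_sqrt_self X hSps.nonneg
  have hSpd : S.PosDef := posDef_of_sq (CFC.sqrt_nonneg X).posSemidef hX hSS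
  have hSu : IsUnit S.det := hSpd.det_pos.ne'.isUnit
  have hSinv_pd : S⁻¹.PosDef := hSpd.inv
  have hXinv : X⁻¹ = S⁻¹ * S⁻¹ := by rw [← hSS, Matrix.mul_inv_rev]
  set C := S⁻¹ * A * S⁻¹ with hCdef
  have hCpd : C.PosDef := by
    have h := posDef_conj hA (isUnit_nonsing_inv_iff.mpr hSpd.isUnit)
    rwa [hSinv_pd.1.eq] at h
  have htr : Matrix.trace (X⁻¹ * A) = Matrix.trace C := by
    rw [hXinv]
    exact (Matrix.trace_mul_cycle S⁻¹ A S⁻¹).symm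
  -- determinant relation
  have hdetS : S.det * S.det = X.det := by rw [← Matrix.det_mul, hSS]
  have hdetC : C.det = S.det⁻¹ * A.det * S.det⁻¹ := by
    rw [hCdef, Matrix.det_mul, Matrix.det_mul, Matrix.det_nonsing_inv, Ring.inverse_eq_inv']
  have hXre : 0 < X.det.re := det_re_pos hX
  have hAre : 0 < A.det.re := det_re_pos hA
  have hCre : 0 < C.det.re := det_re_pos hCpd
  have hCre_eq : C.det.re = A.det.re / X.det.re := by
    have h1 : C.det = ((A.det.re / X.det.re : ℝ) : ℂ) := by
      rw [hdetC, det_eq_ofReal_re hA, det_eq_ofReal_re hSpd]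
      rw [det_eq_ofReal_re hSpd, det_eq_ofReal_re hX] at hdetS
      have hXeq : (X.det.re : ℂ) = (S.det.re : ℂ) * (S.det.re : ℂ) := by
        rw [hdetS]
      have hSne : (S.det.re : ℂ) ≠ 0 := by
        exact_mod_cast (det_re_pos hSpd).ne'
      push_cast
      rw [hXeq]
      field_simp
      simp
    rw [h1, Complex.ofReal_re]
  -- eigenvalue estimates
  have hlog : Real.log (C.det.re) ≤ (Matrix.trace C).re - K := by
    rw [det_re_eq_prod_eigen hCpd.1, trace_re_eq_sum_eigen hCpd.1]
    have hpos : ∀ i ∈ (Finset.univ : Finset (Fin K)), hCpd.1.eigenvalues i ≠ 0 :=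
      fun i _ => (hCpd.eigenvalues_pos i).ne'
    rw [Real.log_prod hpos]
    have h1 : ∀ i ∈ (Finset.univ : Finset (Fin K)),
        Real.log (hCpd.1.eigenvalues i) ≤ hCpd.1.eigenvalues i - 1 :=
      fun i _ => Real.log_le_sub_one_of_pos (hCpd.eigenvalues_pos i)
    calc ∑ i, Real.log (hCpd.1.eigenvalues i) ≤ ∑ i, (hCpd.1.eigenvalues i - 1) :=
          Finset.sum_le_sum h1
      _ = (∑ i, hCpd.1.eigenvalues i) - K := by
          rw [Finset.sum_sub_distrib]
          simp [Finset.card_univ]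
  rw [hCre_eq, Real.log_div hAre.ne' hXre.ne'] at hlog
  rw [htr]
  linarith

lemma logdet_concave_combo {A B : Matrix (Fin K) (Fin K) ℂ} (hA : A.PosDef) (hB : B.PosDef)
    {a b : ℝ} (ha : 0 ≤ a) (hb : 0 ≤ b) (hab : a + b = 1) :
    a * Real.log (A.det.re) + b * Real.log (B.det.re)
      ≤ Real.log ((((a : ℂ) • A + (b : ℂ) • B).det).re) := by
  set X := (a : ℂ) • A + (b : ℂ) • B with hXdef
  have hX : X.PosDef := posDef_combo hA hB ha hb hab
  have hXu : IsUnit X.det := hX.det_pos.ne'.isUnit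
  have t1 := logdet_tangent hX hA
  have t2 := logdet_tangent hX hB
  have key : a * (Matrix.trace (X⁻¹ * A)).re + b * (Matrix.trace (X⁻¹ * B)).re = K := by
    have h1 : X⁻¹ * X = 1 := Matrix.nonsing_inv_mul X hXu
    have h2 : X⁻¹ * X = (a : ℂ) • (X⁻¹ * A) + (b : ℂ) • (X⁻¹ * B) := by
      conv_lhs => rw [hXdef]
      rw [Matrix.mul_add, Matrix.mul_smul, Matrix.mul_smul]
    have h3 := h2.symm.trans h1
    have h4 := congrArg (fun Z : Matrix (Fin K) (Fin K) ℂ => (Matrix.trace Z).re) h3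
    simpa [Matrix.trace_add, Matrix.trace_smul, smul_eq_mul, Complex.add_re,
      Complex.re_ofReal_mul, Matrix.trace_one] using h4
  have e1 := mul_le_mul_of_nonneg_left t1 ha
  have e2 := mul_le_mul_of_nonneg_left t2 hb
  have hsum : a * Real.log (X.det.re) + b * Real.log (X.det.re) = Real.log (X.det.re) := by
    rw [← add_mul, hab, one_mul]
  have hK : a * (K : ℝ) + b * K = K := by rw [← add_mul, hab, one_mul]
  rw [mul_sub, mul_add] at e1 e2
  linarith

lemma sSup_combo {s1 s2 s3 : Set ℝ} (h1 : s1.Nonempty) (h2 : s2.Nonempty)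
    (h3 : BddAbove s3) {a b : ℝ} (ha : 0 ≤ a) (hb : 0 ≤ b) (hab : a + b = 1)
    (h : ∀ r1 ∈ s1, ∀ r2 ∈ s2, ∃ r3 ∈ s3, a * r1 + b * r2 ≤ r3) :
    a * sSup s1 + b * sSup s2 ≤ sSup s3 := by
  refine le_of_forall_pos_le_add fun ε hε => ?_
  obtain ⟨r1, hr1, hlt1⟩ := exists_lt_of_lt_csSup h1 (show sSup s1 - ε/2 < sSup s1 by linarith)
  obtain ⟨r2, hr2, hlt2⟩ := exists_lt_of_lt_csSup h2 (show sSup s2 - ε/2 < sSup s2 by linarith)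
  obtain ⟨r3, hr3, hle⟩ := h r1 hr1 r2 hr2
  have h3' : r3 ≤ sSup s3 := le_csSup h3 hr3
  have ha1 : a ≤ 1 := by linarith
  have hb1 : b ≤ 1 := by linarith
  nlinarith [mul_le_mul_of_nonneg_left (le_of_lt hlt1) ha,
    mul_le_mul_of_nonneg_left (le_of_lt hlt2) hb,
    mul_le_mul_of_nonneg_right ha1 (le_of_lt hε),
    mul_le_mul_of_nonneg_right hb1 (le_of_lt hε)]

lemma quad_tangent {A N : Matrix (Fin K) (Fin K) ℂ} (hA : A.PosDef) (hN : N.PosSemidef)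
    (R U : Matrix (Fin K) (Fin K) ℂ) :
    2 * (Matrix.trace (R * N * Uᴴ)).re - (Matrix.trace (A * U * N * Uᴴ)).re
      ≤ (Matrix.trace (A⁻¹ * R * N * Rᴴ)).re := by
  have hAu : IsUnit A.det := hA.det_pos.ne'.isUnit
  have hAA : A * A⁻¹ = 1 := Matrix.mul_nonsing_inv A hAu
  have hAAl : A⁻¹ * A = 1 := Matrix.nonsing_inv_mul A hAu
  have hherm : (A⁻¹)ᴴ = A⁻¹ := hA.1.inv.eq
  have cancel : ∀ Z : Matrix (Fin K) (Fin K) ℂ, A * (A⁻¹ * Z) = Z := fun Z => by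
    rw [← Matrix.mul_assoc, hAA, Matrix.one_mul]
  have cancelL : ∀ Z : Matrix (Fin K) (Fin K) ℂ, A⁻¹ * (A * Z) = Z := fun Z => by
    rw [← Matrix.mul_assoc, hAAl, Matrix.one_mul]
  set W := U - A⁻¹ * R with hW
  have key : 0 ≤ (Matrix.trace (A * (W * N * Wᴴ))).re :=
    trace_mul_re_nonneg hA.posSemidef (hN.mul_mul_conjTranspose_same W)
  have hWH : Wᴴ = Uᴴ - Rᴴ * A⁻¹ := by
    rw [hW, Matrix.conjTranspose_sub, Matrix.conjTranspose_mul, hherm]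
  have expand : A * (W * N * Wᴴ)
      = A * U * N * Uᴴ - A * U * N * (Rᴴ * A⁻¹) - R * N * Uᴴ + R * N * (Rᴴ * A⁻¹) := by
    rw [hWH, hW]
    simp only [Matrix.mul_sub, Matrix.sub_mul, Matrix.mul_assoc, cancel]
    abel
  have ht2 : Matrix.trace (A * U * N * (Rᴴ * A⁻¹)) = Matrix.trace (U * N * Rᴴ) := by
    rw [Matrix.trace_mul_comm]
    rw [show Rᴴ * A⁻¹ * (A * U * N) = Rᴴ * (U * N) from by
      simp only [Matrix.mul_assoc, cancelL]]
    exact Matrix.trace_mul_comm _ _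
  have ht2re : (Matrix.trace (U * N * Rᴴ)).re = (Matrix.trace (R * N * Uᴴ)).re := by
    have h : (R * N * Uᴴ)ᴴ = U * N * Rᴴ := by
      rw [Matrix.conjTranspose_mul, Matrix.conjTranspose_mul,
        Matrix.conjTranspose_conjTranspose, hN.1.eq, Matrix.mul_assoc]
    rw [← h, Matrix.trace_conjTranspose]
    exact Complex.conj_re _
  have ht4 : Matrix.trace (R * N * (Rᴴ * A⁻¹)) = Matrix.trace (A⁻¹ * R * N * Rᴴ) := by
    rw [show R * N * (Rᴴ * A⁻¹) = R * N * Rᴴ * A⁻¹ from by simp only [Matrix.mul_assoc],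
      Matrix.trace_mul_comm]
    simp only [Matrix.mul_assoc]
  rw [expand] at key
  simp only [Matrix.trace_sub, Matrix.trace_add, Complex.sub_re, Complex.add_re] at key
  rw [ht2, ht4] at key
  rw [ht2re] at key
  linarith

lemma quad_combo {A1 A2 N : Matrix (Fin K) (Fin K) ℂ} (h1 : A1.PosDef) (h2 : A2.PosDef)
    (hN : N.PosSemidef) (R1 R2 : Matrix (Fin K) (Fin K) ℂ)
    {a b : ℝ} (ha : 0 ≤ a) (hb : 0 ≤ b) (hab : a + b = 1) :
    (Matrix.trace (((a : ℂ) • A1 + (b : ℂ) • A2)⁻¹ * ((a : ℂ) • R1 + (b : ℂ) • R2) * N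
        * ((a : ℂ) • R1 + (b : ℂ) • R2)ᴴ)).re
      ≤ a * (Matrix.trace (A1⁻¹ * R1 * N * R1ᴴ)).re
        + b * (Matrix.trace (A2⁻¹ * R2 * N * R2ᴴ)).re := by
  set Ab := (a : ℂ) • A1 + (b : ℂ) • A2 with hAbdef
  set Rb := (a : ℂ) • R1 + (b : ℂ) • R2 with hRbdef
  have hAb : Ab.PosDef := posDef_combo h1 h2 ha hb hab
  have hAbu : IsUnit Ab.det := hAb.det_pos.ne'.isUnit
  set U := Ab⁻¹ * Rb with hU
  have hUH : Uᴴ = Rbᴴ * Ab⁻¹ := by rw [hU, Matrix.conjTranspose_mul, hAb.1.inv.eq]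
  have e1 : Matrix.trace (Rb * N * Uᴴ) = Matrix.trace (Ab⁻¹ * Rb * N * Rbᴴ) := by
    rw [hUH, show Rb * N * (Rbᴴ * Ab⁻¹) = Rb * N * Rbᴴ * Ab⁻¹ from by
      simp only [Matrix.mul_assoc], Matrix.trace_mul_comm]
    simp only [Matrix.mul_assoc]
  have hc : Ab * U = Rb := by
    rw [hU, ← Matrix.mul_assoc, Matrix.mul_nonsing_inv _ hAbu, Matrix.one_mul]
  have e2 : Matrix.trace (Ab * U * N * Uᴴ) = Matrix.trace (Ab⁻¹ * Rb * N * Rbᴴ) := by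
    rw [hc]; exact e1
  have hq : (Matrix.trace (Ab⁻¹ * Rb * N * Rbᴴ)).re
      = 2 * (Matrix.trace (Rb * N * Uᴴ)).re - (Matrix.trace (Ab * U * N * Uᴴ)).re := by
    rw [e1, e2]; ring
  have hRlin : (Matrix.trace (Rb * N * Uᴴ)).re
      = a * (Matrix.trace (R1 * N * Uᴴ)).re + b * (Matrix.trace (R2 * N * Uᴴ)).re := by
    rw [hRbdef]
    rw [Matrix.add_mul, Matrix.add_mul, Matrix.smul_mul, Matrix.smul_mul,
      Matrix.smul_mul, Matrix.smul_mul, Matrix.trace_add, Matrix.trace_smul,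
      Matrix.trace_smul]
    simp [smul_eq_mul, Complex.add_re, Complex.re_ofReal_mul]
  have hAlin : (Matrix.trace (Ab * U * N * Uᴴ)).re
      = a * (Matrix.trace (A1 * U * N * Uᴴ)).re + b * (Matrix.trace (A2 * U * N * Uᴴ)).re := by
    rw [hAbdef]
    rw [Matrix.add_mul, Matrix.add_mul, Matrix.add_mul, Matrix.smul_mul, Matrix.smul_mul,
      Matrix.smul_mul, Matrix.smul_mul, Matrix.smul_mul, Matrix.smul_mul,
      Matrix.trace_add, Matrix.trace_smul, Matrix.trace_smul]
    simp [smul_eq_mul, Complex.add_re, Complex.re_ofReal_mul]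
  have q1 := quad_tangent h1 hN R1 U
  have q2 := quad_tangent h2 hN R2 U
  have q1' := mul_le_mul_of_nonneg_left q1 ha
  have q2' := mul_le_mul_of_nonneg_left q2 hb
  rw [mul_sub] at q1' q2'
  rw [hq, hRlin, hAlin]
  linarith

lemma herm_combo {A B : Matrix (Fin K) (Fin K) ℂ} (hA : A.IsHermitian) (hB : B.IsHermitian)
    (a b : ℝ) : ((a : ℂ) • A + (b : ℂ) • B).IsHermitian := by
  show ((a : ℂ) • A + (b : ℂ) • B)ᴴ = _
  rw [Matrix.conjTranspose_add, Matrix.conjTranspose_smul, Matrix.conjTranspose_smul,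
    hA.eq, hB.eq]
  simp [Complex.star_def, Complex.conj_ofReal]

lemma one_add_combo {G1 G2 : Matrix (Fin K) (Fin K) ℂ} {a b : ℝ} (hab : a + b = 1) :
    (1 : Matrix (Fin K) (Fin K) ℂ) + ((a : ℂ) • G1 + (b : ℂ) • G2)
      = (a : ℂ) • (1 + G1) + (b : ℂ) • (1 + G2) := by
  have hone : (a : ℂ) • (1 : Matrix (Fin K) (Fin K) ℂ) + (b : ℂ) • 1 = 1 := by
    rw [← add_smul]
    have : ((a : ℂ) + b) = 1 := by exact_mod_cast congrArg (Complex.ofReal) hab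
    rw [this, one_smul]
  have h2 : (a : ℂ) • ((1 : Matrix (Fin K) (Fin K) ℂ) + G1) + (b : ℂ) • (1 + G2)
      = ((a : ℂ) • (1 : Matrix (Fin K) (Fin K) ℂ) + (b : ℂ) • 1)
        + ((a : ℂ) • G1 + (b : ℂ) • G2) := by
    rw [smul_add, smul_add]; abel
  rw [h2, hone]

lemma trace_Mt {A R N Mt : Matrix (Fin K) (Fin K) ℂ} (h : Mt = -N) :
    Matrix.trace (A * R * Mt * Rᴴ) = -Matrix.trace (A * R * N * Rᴴ) := by
  subst h
  rw [Matrix.mul_neg, Matrix.neg_mul, Matrix.trace_neg]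

end GmiAux

open GmiAux

/-- Appendix G. The Method II GMI with front-end filter and interference
cancelation matrix optimized out,
`G ↦ log det(I+G) + Tr(M(I+G)) + sup_R { 2 Re Tr(PMR) + Tr((I+G)⁻¹ R M̃ Rᴴ) }`
(the supremum over `R` supported on `𝒮`), is concave on the convex set of Hermitian `G`
with `I+G` positive definite. -/
theorem gmi_method2_concave {K : ℕ} (hK : 1 ≤ K)
    (M Mt P : Matrix (Fin K) (Fin K) ℂ)
    (hM : M.IsHermitian) (hMt : (-Mt).PosDef) (hP : P.IsHermitian)
    (S : Set (Fin K × Fin K)) :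
    ConcaveOn ℝ {G : Matrix (Fin K) (Fin K) ℂ | G.IsHermitian ∧ (1 + G).PosDef}
      (fun G => (Complex.log ((1 + G).det)).re + (Matrix.trace (M * (1 + G))).re
        + sSup {r : ℝ | ∃ R : Matrix (Fin K) (Fin K) ℂ,
            (∀ k ℓ : Fin K, (k, ℓ) ∉ S → R k ℓ = 0) ∧
            r = 2 * (Matrix.trace (P * M * R)).re
              + (Matrix.trace ((1 + G)⁻¹ * R * Mt * Rᴴ)).re}) := by
  classical
  set N : Matrix (Fin K) (Fin K) ℂ := -Mt with hNdef
  have hMtN : Mt = -N := by rw [hNdef, neg_neg]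
  have hN : N.PosDef := hMt
  have hNu : IsUnit N.det := hN.det_pos.ne'.isUnit
  set U₀ : Matrix (Fin K) (Fin K) ℂ := (N⁻¹ * (P * M))ᴴ with hU0def
  constructor
  · -- convexity of the domain
    intro x hx y hy a b ha hb hab
    obtain ⟨hxh, hxp⟩ := hx
    obtain ⟨hyh, hyp⟩ := hy
    refine ⟨?_, ?_⟩
    · rw [real_smul_eq, real_smul_eq]
      exact herm_combo hxh hyh a b
    · rw [real_smul_eq, real_smul_eq, one_add_combo hab]
      exact posDef_combo hxp hyp ha hb hab
  · intro x hx y hy a b ha hb hab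
    obtain ⟨hxh, hxp⟩ := hx
    obtain ⟨hyh, hyp⟩ := hy
    simp only [smul_eq_mul]
    set Az : Matrix (Fin K) (Fin K) ℂ := (a : ℂ) • (1 + x) + (b : ℂ) • (1 + y) with hAzdef
    have hAz : Az.PosDef := posDef_combo hxp hyp ha hb hab
    have hzz : (1 : Matrix (Fin K) (Fin K) ℂ) + (a • x + b • y) = Az := by
      rw [real_smul_eq a x, real_smul_eq b y, one_add_combo hab]
    simp only [hzz]
    -- part 1 : log det
    have part1 : a * (Complex.log ((1 + x).det)).re + b * (Complex.log ((1 + y).det)).re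
        ≤ (Complex.log (Az.det)).re := by
      rw [log_det_re hxp, log_det_re hyp, log_det_re hAz]
      exact logdet_concave_combo hxp hyp ha hb hab
    -- part 2 : linear trace
    have part2 : a * (Matrix.trace (M * (1 + x))).re + b * (Matrix.trace (M * (1 + y))).re
        = (Matrix.trace (M * Az)).re := by
      conv_rhs => rw [hAzdef, Matrix.mul_add, Matrix.mul_smul, Matrix.mul_smul,
        Matrix.trace_add, Matrix.trace_smul, Matrix.trace_smul]
      simp [smul_eq_mul, Complex.add_re, Complex.re_ofReal_mul]
    -- part 3 : the supremum
    have part3 : a * sSup {r : ℝ | ∃ R : Matrix (Fin K) (Fin K) ℂ,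
            (∀ k ℓ : Fin K, (k, ℓ) ∉ S → R k ℓ = 0) ∧
            r = 2 * (Matrix.trace (P * M * R)).re
              + (Matrix.trace ((1 + x)⁻¹ * R * Mt * Rᴴ)).re}
        + b * sSup {r : ℝ | ∃ R : Matrix (Fin K) (Fin K) ℂ,
            (∀ k ℓ : Fin K, (k, ℓ) ∉ S → R k ℓ = 0) ∧
            r = 2 * (Matrix.trace (P * M * R)).re
              + (Matrix.trace ((1 + y)⁻¹ * R * Mt * Rᴴ)).re}
        ≤ sSup {r : ℝ | ∃ R : Matrix (Fin K) (Fin K) ℂ,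
            (∀ k ℓ : Fin K, (k, ℓ) ∉ S → R k ℓ = 0) ∧
            r = 2 * (Matrix.trace (P * M * R)).re
              + (Matrix.trace (Az⁻¹ * R * Mt * Rᴴ)).re} := by
      apply sSup_combo
      · exact ⟨_, ⟨0, fun _ _ _ => rfl, rfl⟩⟩
      · exact ⟨_, ⟨0, fun _ _ _ => rfl, rfl⟩⟩
      · -- bounded above
        refine ⟨(Matrix.trace (Az * U₀ * N * U₀ᴴ)).re, ?_⟩
        rintro r ⟨R, hRs, rfl⟩
        have hqt := quad_tangent hAz hN.posSemidef R U₀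
        have htr0 : Matrix.trace (R * N * U₀ᴴ) = Matrix.trace (P * M * R) := by
          rw [hU0def, Matrix.conjTranspose_conjTranspose]
          rw [show R * N * (N⁻¹ * (P * M)) = R * (P * M) from by
            rw [Matrix.mul_assoc, ← Matrix.mul_assoc N N⁻¹, Matrix.mul_nonsing_inv _ hNu,
              Matrix.one_mul]]
          exact Matrix.trace_mul_comm _ _
        rw [htr0] at hqt
        have hMtq : (Matrix.trace (Az⁻¹ * R * Mt * Rᴴ)).re
            = -(Matrix.trace (Az⁻¹ * R * N * Rᴴ)).re := by
          rw [trace_Mt hMtN, Complex.neg_re]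
        rw [hMtq]
        linarith
      · exact ha
      · exact hb
      · exact hab
      · rintro r1 ⟨R1, hR1s, rfl⟩ r2 ⟨R2, hR2s, rfl⟩
        set Rb : Matrix (Fin K) (Fin K) ℂ := (a : ℂ) • R1 + (b : ℂ) • R2 with hRbdef
        refine ⟨2 * (Matrix.trace (P * M * Rb)).re
            + (Matrix.trace (Az⁻¹ * Rb * Mt * Rbᴴ)).re, ⟨Rb, ?_, rfl⟩, ?_⟩
        · intro k l hkl
          rw [hRbdef]
          simp [Matrix.add_apply, Matrix.smul_apply, hR1s k l hkl, hR2s k l hkl]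
        · have lin : (Matrix.trace (P * M * Rb)).re
              = a * (Matrix.trace (P * M * R1)).re + b * (Matrix.trace (P * M * R2)).re := by
            rw [hRbdef, Matrix.mul_add, Matrix.mul_smul, Matrix.mul_smul, Matrix.trace_add,
              Matrix.trace_smul, Matrix.trace_smul]
            simp [smul_eq_mul, Complex.add_re, Complex.re_ofReal_mul]
          have hq1 : (Matrix.trace ((1 + x)⁻¹ * R1 * Mt * R1ᴴ)).re
              = -(Matrix.trace ((1 + x)⁻¹ * R1 * N * R1ᴴ)).re := by
            rw [trace_Mt hMtN, Complex.neg_re]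
          have hq2 : (Matrix.trace ((1 + y)⁻¹ * R2 * Mt * R2ᴴ)).re
              = -(Matrix.trace ((1 + y)⁻¹ * R2 * N * R2ᴴ)).re := by
            rw [trace_Mt hMtN, Complex.neg_re]
          have hq3 : (Matrix.trace (Az⁻¹ * Rb * Mt * Rbᴴ)).re
              = -(Matrix.trace (Az⁻¹ * Rb * N * Rbᴴ)).re := by
            rw [trace_Mt hMtN, Complex.neg_re]
          have hqc := quad_combo hxp hyp hN.posSemidef R1 R2 ha hb hab
          rw [lin, hq1, hq2, hq3]
          rw [hAzdef, hRbdef]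
          linarith
    linarith
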